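/- Let X = (X_k)_{k∈ℕ} be a sequence of independent integrable real random variables with E[X_k] = 0 for every k, let X̂ = (X̂_k)_{k∈ℕ} be an independent copy of X, and let I be uniformly distributed on {1,…,m}, with X, X̂, I mutually independent. Define X^{(I)}_k = X_k·1{I ≠ k} + X̂_k·1{I = k} for k ∈ {1,…,m}. Then for every integer p with 1 ≤ p ≤ m and every kernel f of order p whose support is contained in {1,…,m}^p, almost surely E[ Q_p(f; (X^{(I)}_k)_{k∈[m]}) | σ(X) ] = (1 − p/m) · Q_p(f; X). -/

import Mathlib

open MeasureTheory ProbabilityTheory Filter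
open scoped ENNReal NNReal

/-- A kernel of order `p`: a function on `p`-tuples of indices that is symmetric in its
arguments and vanishes on diagonals. -/
def IsKernel {p : ℕ} (f : (Fin p → ℕ) → ℝ) : Prop :=
  (∀ (σ : Equiv.Perm (Fin p)) (i : Fin p → ℕ), f (i ∘ σ) = f i) ∧
  (∀ i : Fin p → ℕ, ¬ Function.Injective i → f i = 0)

/-- The homogeneous sum `Q_p(f; X)` for a kernel `f` supported on indices `< m`:
the finite sum `∑_{i₁,…,i_p < m} f(i₁,…,i_p) X_{i₁} ⋯ X_{i_p}`. -/
noncomputable def homSum {Ω : Type*} (p m : ℕ) (f : (Fin p → ℕ) → ℝ)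
    (X : ℕ → Ω → ℝ) (ω : Ω) : ℝ :=
  ∑ i : Fin p → Fin m, f (fun k => (i k : ℕ)) * ∏ k, X (i k : ℕ) ω


lemma measurable_comap' {α β : Type*} [mβ : MeasurableSpace β] (f : α → β) :
    Measurable[MeasurableSpace.comap f mβ] f :=
  measurable_iff_comap_le.mpr le_rfl

lemma prod_swap_decomp {Ω : Type*} (p : ℕ) (v : Fin p → ℕ) (hv : Function.Injective v)
    (I : Ω → ℝ) (X Xhat : ℕ → Ω → ℝ) (ω : Ω) :
    ∏ k, (if I ω = (v k : ℝ) then Xhat (v k) ω else X (v k) ω)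
      = (∏ k, X (v k) ω) * (1 - ∑ j, (if I ω = (v j : ℝ) then (1:ℝ) else 0))
        + ∑ j, ((if I ω = (v j : ℝ) then (1:ℝ) else 0) * Xhat (v j) ω)
            * ∏ k ∈ Finset.univ.erase j, X (v k) ω := by
  classical
  by_cases h : ∃ j, I ω = (v j : ℝ)
  · obtain ⟨j, hj⟩ := h
    have hiff : ∀ k, (I ω = (v k : ℝ)) ↔ k = j := by
      intro k
      constructor
      · intro hk
        exact hv (Nat.cast_injective (hk ▸ hj : ((v k : ℕ) : ℝ) = (v j : ℕ)))
      · rintro rfl; exact hj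
    simp only [hiff]
    rw [← Finset.mul_prod_erase Finset.univ _ (Finset.mem_univ j)]
    rw [Finset.prod_congr rfl (fun k hk => if_neg (Finset.ne_of_mem_erase hk))]
    simp only [ite_mul, one_mul, zero_mul, if_pos rfl]
    rw [Fintype.sum_ite_eq' j (fun _ => (1:ℝ)), Fintype.sum_ite_eq' j
      (fun j1 => Xhat (v j1) ω * ∏ k ∈ Finset.univ.erase j1, X (v k) ω)]
    simp
  · push_neg at h
    simp [h]

/-- **Conditional expectation for the random-coordinate exchangeable pair.** Let `X` be an
independent centered integrable sequence, `X̂` an independent copy, and `I` uniform on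
`{0, …, m-1}` (encoded as a real-valued random variable), all mutually independent. With
`X^{(I)}_k = X_k 1{I ≠ k} + X̂_k 1{I = k}`, for every kernel `f` of order `p` with
`1 ≤ p ≤ m` supported in `{0, …, m-1}^p`, one has
`E[Q_p(f; X^{(I)}) | σ(X)] = (1 - p/m) Q_p(f; X)` almost surely. -/
theorem stmt9 {Ω : Type*} [MeasurableSpace Ω] (μ : Measure Ω) [IsProbabilityMeasure μ]
    (m : ℕ) (hm : 1 ≤ m)
    (X Xhat : ℕ → Ω → ℝ) (I : Ω → ℝ)
    (hXmeas : ∀ k, Measurable (X k)) (hXhatmeas : ∀ k, Measurable (Xhat k))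
    (hImeas : Measurable I)
    (hXint : ∀ k, Integrable (X k) μ) (hXmean : ∀ k, ∫ ω, X k ω ∂μ = 0)
    (hIndep : iIndepFun
      (Sum.elim X (Sum.elim Xhat (fun _ : Unit => I))) μ)
    (hcopy : ∀ k, μ.map (Xhat k) = μ.map (X k))
    (hIunif : ∀ k : ℕ, k < m → μ {ω | I ω = (k : ℝ)} = (m : ℝ≥0∞)⁻¹)
    (hIsupp : ∀ᵐ ω ∂μ, ∃ k : ℕ, k < m ∧ I ω = (k : ℝ))
    (p : ℕ) (hp1 : 1 ≤ p) (hpm : p ≤ m)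
    (f : (Fin p → ℕ) → ℝ) (hker : IsKernel f)
    (hsupp : ∀ i : Fin p → ℕ, (∃ j, m ≤ i j) → f i = 0) :
    μ[homSum p m f (fun k ω => if I ω = (k : ℝ) then Xhat k ω else X k ω) |
        ⨆ i, MeasurableSpace.comap (X i) inferInstance]
      =ᵐ[μ] fun ω => (1 - (p : ℝ) / m) * homSum p m f X ω := by
  classical
  rename_i mΩ0 hprob
  -- Xhat integrable, mean zero (before any σ-algebra locals)
  have hXhatint : ∀ n, Integrable (Xhat n) μ := by
    intro n
    have h1 : Integrable id (μ.map (X n)) :=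
      (integrable_map_measure aestronglyMeasurable_id (hXmeas n).aemeasurable).mpr (hXint n)
    rw [← hcopy n] at h1
    have := (integrable_map_measure aestronglyMeasurable_id
      (hXhatmeas n).aemeasurable).mp h1
    simpa using this
  have hXhatmean : ∀ n, ∫ ω, Xhat n ω ∂μ = 0 := by
    intro n
    have h1 : ∫ x, id x ∂(μ.map (Xhat n)) = ∫ ω, Xhat n ω ∂μ :=
      integral_map (hXhatmeas n).aemeasurable aestronglyMeasurable_id
    have h2 : ∫ x, id x ∂(μ.map (X n)) = ∫ ω, X n ω ∂μ :=
      integral_map (hXmeas n).aemeasurable aestronglyMeasurable_id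
    rw [← h1, hcopy n, h2, hXmean n]
  -- indicator functions
  have hsetmeas : ∀ c : ℝ, MeasurableSet[mΩ0] {ω | I ω = c} :=
    fun c => hImeas (measurableSet_singleton c)
  have hindmeas : ∀ c : ℝ, Measurable[mΩ0] (fun ω => if I ω = c then (1:ℝ) else 0) :=
    fun c => Measurable.ite (hsetmeas c) measurable_const measurable_const
  have hindint : ∀ c : ℝ, Integrable (fun ω => if I ω = c then (1:ℝ) else 0) μ := by
    intro c
    have h2 : (fun ω => if I ω = c then (1:ℝ) else 0)
        = Set.indicator {ω | I ω = c} (fun _ => (1:ℝ)) := by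
      ext ω; simp [Set.indicator_apply]
    rw [h2]
    exact (integrable_const (1:ℝ)).indicator (hsetmeas c)
  have hindval : ∀ k : ℕ, k < m →
      ∫ ω, (if I ω = (k : ℝ) then (1:ℝ) else 0) ∂μ = 1 / m := by
    intro k hk
    have h2 : (fun ω => if I ω = (k:ℝ) then (1:ℝ) else 0)
        = Set.indicator {ω | I ω = (k:ℝ)} (fun _ => (1:ℝ)) := by
      ext ω; simp [Set.indicator_apply]
    rw [h2, integral_indicator_const (1:ℝ) (hsetmeas _), measureReal_def, hIunif k hk]
    simp [ENNReal.toReal_inv, one_div]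
  set Y : ℕ ⊕ (ℕ ⊕ Unit) → Ω → ℝ := Sum.elim X (Sum.elim Xhat (fun _ : Unit => I)) with hYdef
  have hYmeas : ∀ j, Measurable[mΩ0] (Y j) := by
    rintro (n | n | ⟨⟩)
    · exact hXmeas n
    · exact hXhatmeas n
    · exact hImeas
  -- products of X over finsets : integrability
  have hprodint : ∀ s : Finset ℕ, Integrable (fun ω => ∏ n ∈ s, X n ω) μ := by
    intro s
    induction s using Finset.induction with
    | empty => simpa using integrable_const (1:ℝ)
    | @insert a s ha ih =>
      have hindep : IndepFun (fun ω => ∏ n ∈ s, X n ω) (X a) μ := by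
        have h := hIndep.indepFun_finsetProd_of_notMem hYmeas
          (s := s.image Sum.inl) (i := Sum.inl a) (by simp [ha])
        have heq : (∏ j ∈ s.image Sum.inl, Y j) = fun ω => ∏ n ∈ s, X n ω := by
          rw [Finset.prod_image (fun x _ y _ h => Sum.inl.inj h)]
          ext ω
          rw [Finset.prod_apply]
          exact Finset.prod_congr rfl fun c _ => rfl
        rwa [heq] at h
      have h3 := hindep.symm.integrable_mul (hXint a) ih
      refine h3.congr ?_
      filter_upwards with ω
      simp [Finset.prod_insert ha]
  -- independence of products of X with Xhat
  have hprodXhat : ∀ (s : Finset ℕ) (n : ℕ),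
      IndepFun (fun ω => ∏ j ∈ s, X j ω) (Xhat n) μ := by
    intro s n
    have h := hIndep.indepFun_finsetProd_of_notMem hYmeas
      (s := s.image Sum.inl) (i := Sum.inr (Sum.inl n)) (by simp)
    have heq : (∏ j ∈ s.image Sum.inl, Y j) = fun ω => ∏ k ∈ s, X k ω := by
      rw [Finset.prod_image (fun x _ y _ h => Sum.inl.inj h)]
      ext ω
      rw [Finset.prod_apply]
      exact Finset.prod_congr rfl fun c _ => rfl
    rwa [heq] at h
  -- ∫ indicator * Xhat = 0
  have hZjint0 : ∀ (c : ℝ) (n : ℕ),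
      ∫ ω, (if I ω = c then (1:ℝ) else 0) * Xhat n ω ∂μ = 0 := by
    intro c n
    have hIX : IndepFun I (Xhat n) μ :=
      hIndep.indepFun (i := Sum.inr (Sum.inr ())) (j := Sum.inr (Sum.inl n)) (by simp)
    have hind : IndepFun (fun ω => if I ω = c then (1:ℝ) else 0) (Xhat n) μ :=
      hIX.comp (φ := fun x : ℝ => if x = c then (1:ℝ) else 0) (ψ := id) (Measurable.ite (p := fun x : ℝ => x = c) (measurableSet_singleton c)
        measurable_const measurable_const) measurable_id
    have h2 : ∫ ω, (if I ω = c then (1:ℝ) else 0) * Xhat n ω ∂μ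
        = (∫ ω, (if I ω = c then (1:ℝ) else 0) ∂μ) * ∫ ω, Xhat n ω ∂μ :=
      hind.integral_fun_mul_eq_mul_integral (hindint c).aestronglyMeasurable (hXhatint n).aestronglyMeasurable
    rw [h2, hXhatmean n, mul_zero]
  -- σ-algebras
  set mX : MeasurableSpace Ω := ⨆ i, MeasurableSpace.comap (X i) inferInstance with hmXdef
  have hle : mX ≤ mΩ0 := iSup_le fun i => (hXmeas i).comap_le
  haveI : SigmaFinite (μ.trim hle) := inferInstance
  set mT : MeasurableSpace Ω :=
    ⨆ j ∈ Set.range (Sum.inr : ℕ ⊕ Unit → ℕ ⊕ (ℕ ⊕ Unit)),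
      MeasurableSpace.comap (Y j) inferInstance with hmTdef
  have hleT : mT ≤ mΩ0 := iSup₂_le fun j _ => (hYmeas j).comap_le
  have hIndep2 : Indep mT mX μ := by
    have hd : Disjoint (Set.range (Sum.inr : ℕ ⊕ Unit → ℕ ⊕ (ℕ ⊕ Unit)))
        (Set.range (Sum.inl : ℕ → ℕ ⊕ (ℕ ⊕ Unit))) := by
      rw [Set.disjoint_left]
      rintro _ ⟨x, rfl⟩ ⟨y, h⟩
      exact Sum.inl_ne_inr h
    have h := indep_iSup_of_disjoint (fun j => (hYmeas j).comap_le) hIndep hd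
    have heq : (⨆ j ∈ Set.range (Sum.inl : ℕ → ℕ ⊕ (ℕ ⊕ Unit)),
        MeasurableSpace.comap (Y j) inferInstance) = mX := by
      rw [iSup_range]; rfl
    rwa [heq] at h
  have hcondZ : ∀ Z : Ω → ℝ, StronglyMeasurable[mT] Z →
      μ[Z | mX] =ᵐ[μ] fun _ => ∫ ω, Z ω ∂μ := fun Z hZ =>
    condExp_indep_eq hleT hle hZ hIndep2
  have hImT : Measurable[mT] I := by
    refine (measurable_comap' I).mono ?_ le_rfl
    exact le_iSup₂ (f := fun (j : ℕ ⊕ (ℕ ⊕ Unit))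
      (_ : j ∈ Set.range (Sum.inr : ℕ ⊕ Unit → ℕ ⊕ (ℕ ⊕ Unit))) =>
        MeasurableSpace.comap (Y j) inferInstance)
      (Sum.inr (Sum.inr ())) ⟨Sum.inr (), rfl⟩
  have hXhatmT : ∀ n, Measurable[mT] (Xhat n) := by
    intro n
    refine (measurable_comap' (Xhat n)).mono ?_ le_rfl
    exact le_iSup₂ (f := fun (j : ℕ ⊕ (ℕ ⊕ Unit))
      (_ : j ∈ Set.range (Sum.inr : ℕ ⊕ Unit → ℕ ⊕ (ℕ ⊕ Unit))) =>
        MeasurableSpace.comap (Y j) inferInstance)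
      (Sum.inr (Sum.inl n)) ⟨Sum.inl n, rfl⟩
  have hXmX : ∀ n, Measurable[mX] (X n) := by
    intro n
    exact (measurable_comap' (X n)).mono
      (le_iSup (fun i => MeasurableSpace.comap (X i) inferInstance) n) le_rfl
  -- main estimate for an injective tuple
  have main : ∀ v : Fin p → ℕ, Function.Injective v → (∀ k, v k < m) →
      Integrable (fun ω => ∏ k, (if I ω = (v k : ℝ) then Xhat (v k) ω else X (v k) ω)) μ ∧
      μ[(fun ω => ∏ k, (if I ω = (v k : ℝ) then Xhat (v k) ω else X (v k) ω)) | mX]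
        =ᵐ[μ] fun ω => (1 - (p:ℝ)/m) * ∏ k, X (v k) ω := by
    intro v hv hvm
    set A : Ω → ℝ := fun ω => ∏ n ∈ Finset.univ.image v, X n ω with hAdef
    set Z0 : Ω → ℝ := fun ω => 1 - ∑ j, (if I ω = (v j:ℝ) then (1:ℝ) else 0) with hZ0def
    set B : Fin p → Ω → ℝ :=
      fun j ω => ∏ n ∈ (Finset.univ.erase j).image v, X n ω with hBdef
    set Zj : Fin p → Ω → ℝ :=
      fun j ω => (if I ω = (v j:ℝ) then (1:ℝ) else 0) * Xhat (v j) ω with hZjdef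
    have hAeq : ∀ ω, A ω = ∏ k, X (v k) ω := fun ω =>
      Finset.prod_image (fun x _ y _ h => hv h)
    have hBeq : ∀ j ω, B j ω = ∏ k ∈ Finset.univ.erase j, X (v k) ω := fun j ω =>
      Finset.prod_image (fun x _ y _ h => hv h)
    have hAint : Integrable A μ := hprodint _
    have hBint : ∀ j, Integrable (B j) μ := fun j => hprodint _
    have hAmX : StronglyMeasurable[mX] A :=
      (Finset.measurable_prod _ (fun n _ => hXmX n)).stronglyMeasurable
    have hBmX : ∀ j, StronglyMeasurable[mX] (B j) := fun j =>
      (Finset.measurable_prod _ (fun n _ => hXmX n)).stronglyMeasurable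
    have hZ0mT : StronglyMeasurable[mT] Z0 := by
      refine Measurable.stronglyMeasurable ?_
      exact measurable_const.sub (Finset.measurable_sum _ (fun j _ =>
        Measurable.ite (hImT (measurableSet_singleton _)) measurable_const measurable_const))
    have hZjmT : ∀ j, StronglyMeasurable[mT] (Zj j) := by
      intro j
      refine Measurable.stronglyMeasurable ?_
      exact (Measurable.ite (hImT (measurableSet_singleton _)) measurable_const
        measurable_const).mul (hXhatmT (v j))
    have hZ0int : Integrable Z0 μ :=
      (integrable_const (1:ℝ)).sub (integrable_finset_sum _ fun j _ => hindint _)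
    have hZ0val : ∫ ω, Z0 ω ∂μ = 1 - (p:ℝ)/m := by
      have h1 : ∫ ω, (∑ j, if I ω = (v j:ℝ) then (1:ℝ) else 0) ∂μ
          = ∑ _j : Fin p, 1/(m:ℝ) := by
        rw [integral_finset_sum _ fun j _ => hindint _]
        exact Finset.sum_congr rfl fun j _ => hindval (v j) (hvm j)
      rw [hZ0def]
      rw [integral_sub (integrable_const (1:ℝ)) (integrable_finset_sum _ fun j _ => hindint _),
        h1, integral_const]
      simp [Finset.sum_const, Fintype.card_fin, measure_univ]
      ring
    have hZjint2 : ∀ j, Integrable (Zj j) μ := by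
      intro j
      refine (hXhatint (v j)).mono
        (((hindmeas _).mul (hXhatmeas (v j))).aestronglyMeasurable) ?_
      filter_upwards with ω
      rw [hZjdef]
      simp only [norm_mul, Real.norm_eq_abs]
      split_ifs <;> simp [abs_nonneg]
    have hZjval : ∀ j, ∫ ω, Zj j ω ∂μ = 0 := fun j => hZjint0 _ _
    have hAZ0int : Integrable (fun ω => A ω * Z0 ω) μ := by
      have hbd : ∀ ω, ‖A ω * Z0 ω‖ ≤ ‖(1 + (p:ℝ)) * ‖A ω‖‖ := by
        intro ω
        have hS : |∑ j, if I ω = (v j:ℝ) then (1:ℝ) else 0| ≤ (p:ℝ) := by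
          refine (Finset.abs_sum_le_sum_abs _ _).trans ?_
          have : ∀ j : Fin p, |if I ω = (v j:ℝ) then (1:ℝ) else 0| ≤ 1 := by
            intro j; split_ifs <;> simp
          calc ∑ j, |if I ω = (v j:ℝ) then (1:ℝ) else 0| ≤ ∑ _j : Fin p, (1:ℝ) :=
                Finset.sum_le_sum fun j _ => this j
            _ = p := by simp
        have hZ0bd : |Z0 ω| ≤ 1 + (p:ℝ) := by
          have h := abs_le.mp hS
          have hz : Z0 ω = 1 - ∑ j, (if I ω = (v j:ℝ) then (1:ℝ) else 0) := rfl
          rw [hz, abs_le]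
          constructor <;> linarith [h.1, h.2]
        have hp0 : (0:ℝ) ≤ 1 + (p:ℝ) := by positivity
        rw [norm_mul, Real.norm_eq_abs, Real.norm_eq_abs, Real.norm_eq_abs, abs_mul,
          abs_of_nonneg hp0, abs_abs, mul_comm (1 + (p:ℝ))]
        exact mul_le_mul_of_nonneg_left hZ0bd (abs_nonneg _)
      refine Integrable.mono (hAint.norm.const_mul (1 + (p:ℝ)))
        ?_ (Filter.Eventually.of_forall hbd)
      exact ((Finset.measurable_prod _ fun n _ => hXmeas n).mul
        (measurable_const.sub (Finset.measurable_sum _ fun j _ =>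
          hindmeas _))).aestronglyMeasurable
    have hBZint : ∀ j, Integrable (fun ω => B j ω * Zj j ω) μ := by
      intro j
      have h0 : Integrable ((fun ω => ∏ n ∈ (Finset.univ.erase j).image v, X n ω)
          * Xhat (v j)) μ :=
        (hprodXhat _ _).integrable_mul (hBint j) (hXhatint (v j))
      refine Integrable.mono h0 ?_ ?_
      · exact ((Finset.measurable_prod _ fun n _ => hXmeas n).mul
          ((hindmeas _).mul (hXhatmeas (v j)))).aestronglyMeasurable
      · filter_upwards with ω
        simp only [Pi.mul_apply, norm_mul, Real.norm_eq_abs, hZjdef, abs_mul]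
        have h1 : |if I ω = (v j:ℝ) then (1:ℝ) else 0| ≤ 1 := by split_ifs <;> simp
        calc |B j ω| * (|if I ω = (v j:ℝ) then (1:ℝ) else 0| * |Xhat (v j) ω|)
            ≤ |B j ω| * (1 * |Xhat (v j) ω|) := by
              refine mul_le_mul_of_nonneg_left ?_ (abs_nonneg _)
              exact mul_le_mul_of_nonneg_right h1 (abs_nonneg _)
          _ = |B j ω| * |Xhat (v j) ω| := by ring
      -- end
    -- conditional expectations of pieces
    have hc0 : μ[(fun ω => A ω * Z0 ω)|mX] =ᵐ[μ] fun ω => A ω * (1 - (p:ℝ)/m) := by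
      have h1 : μ[A * Z0|mX] =ᵐ[μ] A * μ[Z0|mX] :=
        condExp_mul_of_stronglyMeasurable_left hAmX hAZ0int hZ0int
      have h2 := hcondZ Z0 hZ0mT
      refine h1.trans ?_
      filter_upwards [h2] with ω hω
      simp only [Pi.mul_apply, hω, hZ0val]
    have hcj : ∀ j, μ[(fun ω => B j ω * Zj j ω)|mX] =ᵐ[μ] fun _ => (0:ℝ) := by
      intro j
      have h1 : μ[B j * Zj j|mX] =ᵐ[μ] B j * μ[Zj j|mX] :=
        condExp_mul_of_stronglyMeasurable_left (hBmX j) (hBZint j) (hZjint2 j)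
      have h2 := hcondZ (Zj j) (hZjmT j)
      refine h1.trans ?_
      filter_upwards [h2] with ω hω
      simp only [Pi.mul_apply, hω, hZjval j, mul_zero]
    -- decomposition
    have hFeq : (fun ω => ∏ k, (if I ω = (v k : ℝ) then Xhat (v k) ω else X (v k) ω))
        = (fun ω => A ω * Z0 ω) + ∑ j : Fin p, (fun ω => B j ω * Zj j ω) := by
      funext ω
      rw [Pi.add_apply, Finset.sum_apply]
      rw [prod_swap_decomp p v hv I X Xhat ω]
      rw [← hAeq ω]
      congr 1
      refine Finset.sum_congr rfl fun j _ => ?_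
      rw [hBeq j ω, hZjdef]
      ring
    have hSint : Integrable (∑ j : Fin p, (fun ω => B j ω * Zj j ω)) μ := by
      have he : (fun a => ∑ j : Fin p, B j a * Zj j a)
          = ∑ j : Fin p, (fun ω => B j ω * Zj j ω) := by
        funext a; rw [Finset.sum_apply]
      rw [← he]
      exact integrable_finset_sum _ fun j _ => hBZint j
    constructor
    · rw [hFeq]
      exact hAZ0int.add hSint
    · rw [hFeq]
      have step1 := condExp_add (μ := μ) (m := mX) hAZ0int hSint
      refine step1.trans ?_
      have step2 := condExp_finsetSum (μ := μ) (m := mX)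
        (f := fun j => (fun ω => B j ω * Zj j ω)) (s := Finset.univ)
        (fun j _ => hBZint j)
      have hcall : ∀ᵐ ω ∂μ, ∀ j : Fin p, (μ[(fun ω => B j ω * Zj j ω)|mX]) ω = 0 :=
        ae_all_iff.mpr fun j => hcj j
      filter_upwards [hc0, hcall, step2] with ω h1 h2 h3
      rw [Pi.add_apply, h1, h3, Finset.sum_apply]
      rw [Finset.sum_congr rfl fun j _ => h2 j]
      rw [hAeq ω]
      simp [mul_comm]
  -- assemble over all tuples
  set XI : ℕ → Ω → ℝ := fun k ω => if I ω = (k : ℝ) then Xhat k ω else X k ω with hXIdef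
  set G : (Fin p → Fin m) → Ω → ℝ := fun i ω =>
    f (fun k => (i k : ℕ)) * ∏ k, (if I ω = ((i k : ℕ) : ℝ) then Xhat (i k : ℕ) ω
      else X (i k : ℕ) ω) with hGdef
  have hGint : ∀ i, Integrable (G i) μ := by
    intro i
    by_cases hinj : Function.Injective (fun k => ((i k : ℕ)))
    · exact ((main _ hinj (fun k => (i k).isLt)).1).const_mul _
    · have h0 : f (fun k => ((i k):ℕ)) = 0 := hker.2 _ hinj
      have : G i = fun _ => 0 := by funext ω; rw [hGdef]; simp [h0]
      rw [this]
      exact integrable_const 0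
  have hGcond : ∀ i : Fin p → Fin m, μ[G i|mX] =ᵐ[μ]
      fun ω => (1 - (p:ℝ)/m) * (f (fun k => (i k : ℕ)) * ∏ k, X (i k : ℕ) ω) := by
    intro i
    by_cases hinj : Function.Injective (fun k => ((i k : ℕ)))
    · have hGi : G i = f (fun k => (i k : ℕ)) •
          (fun ω => ∏ k, (if I ω = ((i k : ℕ) : ℝ) then Xhat (i k : ℕ) ω
            else X (i k : ℕ) ω)) := by
        funext ω; rw [hGdef]; simp [smul_eq_mul]
      rw [hGi]
      have h1 := condExp_smul (μ := μ) (m := mX) (f (fun k => (i k : ℕ)))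
        (fun ω => ∏ k, (if I ω = ((i k : ℕ) : ℝ) then Xhat (i k : ℕ) ω
          else X (i k : ℕ) ω))
      refine h1.trans ?_
      have h2 := (main _ hinj (fun k => (i k).isLt)).2
      filter_upwards [h2] with ω hω
      rw [Pi.smul_apply, hω, smul_eq_mul]
      ring
    · have h0 : f (fun k => ((i k):ℕ)) = 0 := hker.2 _ hinj
      have hGi : G i = fun _ => (0:ℝ) := by funext ω; rw [hGdef]; simp [h0]
      rw [hGi]
      have : μ[(fun _ => (0:ℝ)) | mX] =ᵐ[μ] fun _ => (0:ℝ) := by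
        rw [show (fun _ : Ω => (0:ℝ)) = (0 : Ω → ℝ) from rfl, condExp_zero]
      refine this.trans ?_
      filter_upwards with ω
      simp [h0]
  have hhomeq : homSum p m f XI = ∑ i : Fin p → Fin m, G i := by
    funext ω
    rw [homSum, Finset.sum_apply]
  rw [hhomeq]
  have hsum := condExp_finsetSum (μ := μ) (m := mX) (f := G) (s := Finset.univ)
    (fun i _ => hGint i)
  refine hsum.trans ?_
  have hall : ∀ᵐ ω ∂μ, ∀ i : Fin p → Fin m, (μ[G i|mX]) ω
      = (1 - (p:ℝ)/m) * (f (fun k => (i k : ℕ)) * ∏ k, X (i k : ℕ) ω) :=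
    ae_all_iff.mpr fun i => hGcond i
  filter_upwards [hall] with ω hω
  rw [Finset.sum_apply]
  rw [Finset.sum_congr rfl fun i _ => hω i]
  rw [homSum, Finset.mul_sum]
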